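/- For every τ ∈ ℝ, the integral ∫_{−∞}^{0} e^{λs} e^{−2αω(s)} (1 + h(s+τ)) ds is finite. -/

import Mathlib

open Set MeasureTheory Filter Topology

/-- Let `λ > 0`, `α > 0`, `0 ≤ δ < λ`, let `ω : ℝ → ℝ` be continuous with
`ω(t)/t → 0` as `t → -∞`, and let `h : ℝ → [0,∞)` be measurable with
`∫_{-∞}^{τ} e^{δs} h(s) ds < ∞` for every `τ`. Then for every `τ ∈ ℝ` the integral
`∫_{-∞}^{0} e^{λs} e^{-2αω(s)} (1 + h(s+τ)) ds` is finite. -/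
theorem absorbing_radius_integral_finite
    (lam α δ : ℝ) (hlam : 0 < lam) (hα : 0 < α) (hδ0 : 0 ≤ δ) (hδ : δ < lam)
    (ω : ℝ → ℝ) (hω : Continuous ω)
    (hωlim : Tendsto (fun t => ω t / t) atBot (𝓝 0))
    (h : ℝ → ℝ) (hmeas : Measurable h) (hpos : ∀ s, 0 ≤ h s)
    (hint : ∀ τ : ℝ, ∫⁻ s in Iic τ, ENNReal.ofReal (Real.exp (δ * s) * h s) < ⊤)
    (τ : ℝ) :
    ∫⁻ s in Iic (0:ℝ),
        ENNReal.ofReal (Real.exp (lam * s) * Real.exp (-2 * α * ω s) * (1 + h (s + τ)))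
      < ⊤ := by
  set δ' : ℝ := (lam + δ) / 2 with hδ'def
  have hδ'pos : 0 < δ' := by rw [hδ'def]; linarith
  have hδδ' : δ ≤ δ' := by rw [hδ'def]; linarith
  set ε : ℝ := (lam - δ') / (2 * α) with hεdef
  have hεpos : 0 < ε := by
    rw [hεdef, hδ'def]
    exact div_pos (by linarith) (by linarith)
  have h2αε : 2 * α * ε = lam - δ' := by rw [hεdef]; field_simp
  -- eventual bound on ω
  obtain ⟨b, hb⟩ : ∃ b, ∀ t ≤ b, |ω t / t| < ε := by
    have := Metric.tendsto_nhds.mp hωlim ε hεpos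
    rw [eventually_atBot] at this
    simpa [Real.dist_eq, abs_div] using this
  set a : ℝ := min b (-1) with hadef
  have ha0 : a < 0 := lt_of_le_of_lt (min_le_right _ _) (by norm_num)
  have hstep1 : ∀ s ≤ a, lam * s + -2 * α * ω s ≤ δ' * s := by
    intro s hs
    have hsb : s ≤ b := le_trans hs (min_le_left _ _)
    have hs0 : s < 0 := lt_of_le_of_lt hs ha0
    have h1 : |ω s| < ε * (-s) := by
      have hb' := hb s hsb
      rw [abs_div] at hb'
      
      have habs : |s| = -s := abs_of_neg hs0
      have hspos : (0:ℝ) < |s| := abs_pos.mpr hs0.ne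
      calc |ω s| = |ω s| / |s| * |s| := by field_simp
        _ < ε * |s| := mul_lt_mul_of_pos_right hb' hspos
        _ = ε * (-s) := by rw [habs]
    have h2 : -2 * α * ω s ≤ 2 * α * |ω s| := by
      have hn : -ω s ≤ |ω s| := neg_le_abs _
      nlinarith [hα.le]
    have h3 : 2 * α * |ω s| ≤ 2 * α * (ε * (-s)) :=
      mul_le_mul_of_nonneg_left h1.le (by linarith)
    nlinarith [h2αε]
  -- bound on the compact piece
  obtain ⟨x₀, hx₀mem, hx₀⟩ :=
    isCompact_Icc.exists_isMaxOn (nonempty_Icc.mpr ha0.le)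
      (Continuous.continuousOn
        (by continuity : Continuous fun s : ℝ => lam * s + -2 * α * ω s - δ' * s))
  set C : ℝ := Real.exp (max 0 (lam * x₀ + -2 * α * ω x₀ - δ' * x₀)) with hCdef
  have hC1 : 1 ≤ C := Real.one_le_exp (le_max_left _ _)
  have hCpos : 0 < C := lt_of_lt_of_le one_pos hC1
  have hbound : ∀ s ≤ (0:ℝ),
      Real.exp (lam * s) * Real.exp (-2 * α * ω s) ≤ C * Real.exp (δ' * s) := by
    intro s hs
    rw [← Real.exp_add]
    rcases le_or_gt s a with hsa | hsa
    · calc Real.exp (lam * s + -2 * α * ω s) ≤ Real.exp (δ' * s) :=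
            Real.exp_le_exp.mpr (hstep1 s hsa)
        _ ≤ C * Real.exp (δ' * s) := le_mul_of_one_le_left (Real.exp_pos _).le hC1
    · have hmem : s ∈ Icc a 0 := ⟨hsa.le, hs⟩
      have hmax : lam * s + -2 * α * ω s - δ' * s
          ≤ lam * x₀ + -2 * α * ω x₀ - δ' * x₀ := hx₀ hmem
      have hle : lam * s + -2 * α * ω s ≤
          (lam * x₀ + -2 * α * ω x₀ - δ' * x₀) + δ' * s := by linarith
      calc Real.exp (lam * s + -2 * α * ω s)
          ≤ Real.exp ((lam * x₀ + -2 * α * ω x₀ - δ' * x₀) + δ' * s) :=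
            Real.exp_le_exp.mpr hle
        _ ≤ C * Real.exp (δ' * s) := by
            rw [Real.exp_add]
            gcongr
            exact Real.exp_le_exp.mpr (le_max_right _ _)
  -- pointwise domination
  have hmono : ∫⁻ s in Iic (0:ℝ),
      ENNReal.ofReal (Real.exp (lam * s) * Real.exp (-2 * α * ω s) * (1 + h (s + τ)))
      ≤ ∫⁻ s in Iic (0:ℝ),
        (ENNReal.ofReal (C * Real.exp (δ' * s))
          + ENNReal.ofReal (C * Real.exp (δ * s) * h (s + τ))) := by
    apply setLIntegral_mono
    · refine Measurable.add (f := fun s : ℝ => ENNReal.ofReal (C * Real.exp (δ' * s)))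
        (g := fun s : ℝ => ENNReal.ofReal (C * Real.exp (δ * s) * h (s + τ))) ?_ ?_
      · exact (by fun_prop : Measurable fun s : ℝ => ENNReal.ofReal (C * Real.exp (δ' * s)))
      · exact Measurable.ennreal_ofReal (by fun_prop)
    · intro s hs
      have hs0 : s ≤ 0 := hs
      have hb1 := hbound s hs0
      have hexp : Real.exp (δ' * s) ≤ Real.exp (δ * s) :=
        Real.exp_le_exp.mpr (by nlinarith)
      rw [← ENNReal.ofReal_add (by positivity) (mul_nonneg (by positivity) (hpos (s + τ)))]
      apply ENNReal.ofReal_le_ofReal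
      have hH := hpos (s + τ)
      nlinarith [mul_le_mul_of_nonneg_right hb1 hH,
        mul_le_mul_of_nonneg_right (mul_le_mul_of_nonneg_left hexp hCpos.le) hH,
        mul_pos (Real.exp_pos (lam * s)) (Real.exp_pos (-2 * α * ω s))]
  -- finiteness of first piece
  have hA : ∫⁻ s in Iic (0:ℝ), ENNReal.ofReal (C * Real.exp (δ' * s)) < ⊤ := by
    have hpre : (fun x : ℝ => -x) ⁻¹' (Iic (0:ℝ)) = Ici 0 := by ext x; simp
    have heq := (Measure.measurePreserving_neg (volume : Measure ℝ)).setLIntegral_comp_preimage_emb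
      measurableEmbedding_neg (fun x => ENNReal.ofReal (C * Real.exp (δ' * x))) (Iic 0)
    rw [hpre] at heq
    rw [← heq]
    have hI : IntegrableOn (fun x : ℝ => C * Real.exp (-δ' * x)) (Ici 0) := by
      have h2 := (exp_neg_integrableOn_Ioi 0 hδ'pos).const_mul C
      show Integrable _ ((volume : Measure ℝ).restrict (Ici 0))
      rw [← restrict_Ioi_eq_restrict_Ici]
      exact h2
    have h3 := hI.2
    rw [hasFiniteIntegral_iff_ofReal] at h3
    · simp only [neg_mul] at h3
      simpa only [mul_neg] using h3
    · filter_upwards with x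
      positivity
  -- finiteness of second piece
  have hB : ∫⁻ s in Iic (0:ℝ), ENNReal.ofReal (C * Real.exp (δ * s) * h (s + τ)) < ⊤ := by
    have hpre : (fun x : ℝ => x + τ) ⁻¹' (Iic τ) = Iic 0 := by ext x; simp
    have hmp : MeasurePreserving (fun x : ℝ => x + τ) volume volume :=
      measurePreserving_add_right volume τ
    have hmeasg : Measurable fun u : ℝ =>
        ENNReal.ofReal (C * Real.exp (δ * (u - τ)) * h u) := by
      exact ((measurable_const.mul
        (Real.measurable_exp.comp ((measurable_sub_const τ).const_mul δ))).mul hmeas).ennreal_ofReal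
    have heq := hmp.setLIntegral_comp_preimage (measurableSet_Iic (a := τ)) hmeasg
    rw [hpre] at heq
    simp only [add_sub_cancel_right] at heq
    rw [heq]
    have hrw : ∀ u : ℝ, ENNReal.ofReal (C * Real.exp (δ * (u - τ)) * h u)
        = ENNReal.ofReal (C * Real.exp (-(δ * τ))) * ENNReal.ofReal (Real.exp (δ * u) * h u) := by
      intro u
      rw [← ENNReal.ofReal_mul (by positivity)]
      congr 1
      rw [show δ * (u - τ) = -(δ * τ) + δ * u by ring, Real.exp_add]
      ring
    calc ∫⁻ u in Iic τ, ENNReal.ofReal (C * Real.exp (δ * (u - τ)) * h u)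
        = ∫⁻ u in Iic τ, ENNReal.ofReal (C * Real.exp (-(δ * τ)))
            * ENNReal.ofReal (Real.exp (δ * u) * h u) := by
          exact lintegral_congr fun u => hrw u
      _ = ENNReal.ofReal (C * Real.exp (-(δ * τ)))
            * ∫⁻ u in Iic τ, ENNReal.ofReal (Real.exp (δ * u) * h u) :=
          lintegral_const_mul' _ _ ENNReal.ofReal_ne_top
      _ < ⊤ := ENNReal.mul_lt_top ENNReal.ofReal_lt_top (hint τ)
  refine lt_of_le_of_lt hmono ?_
  rw [lintegral_add_left
    (by fun_prop : Measurable fun s : ℝ => ENNReal.ofReal (C * Real.exp (δ' * s)))]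
  exact ENNReal.add_lt_top.mpr ⟨hA, hB⟩
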